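/- Let τ and τ' be two distinguishable tangles in a graph G, and let k be the minimum order of a separation of G distinguishing τ and τ'. Then the set β(τ,τ') of all separations of G that efficiently distinguish τ and τ' is a bottleneck of order k in G. -/

import Mathlib

namespace LS

open SimpleGraph

variable {V : Type*}

/-- `(A, B)` is an (oriented) separation of `G`: the two sides cover `V`
and there is no edge between `A ∖ B` and `B ∖ A`. -/
def IsSep (G : SimpleGraph V) (A B : Set V) : Prop :=
  A ∪ B = Set.univ ∧ ∀ a ∈ A \ B, ∀ b ∈ B \ A, ¬G.Adj a b

/-- `(A,B) ≥ (C,D)` for oriented separations, i.e. `A ⊆ C` and `B ⊇ D`. -/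
def SepGE (s t : Set V × Set V) : Prop := s.1 ⊆ t.1 ∧ t.2 ⊆ s.2

/-- Two (unoriented) separations are nested if they have `≥`-comparable orientations. -/
def Nested (s t : Set V × Set V) : Prop :=
  SepGE s t ∨ SepGE s (t.2, t.1) ∨ SepGE (s.2, s.1) t ∨ SepGE (s.2, s.1) (t.2, t.1)

/-- Two separations cross if they are not nested. -/
def Crosses (s t : Set V × Set V) : Prop := ¬Nested s t

/-- The neighbourhood `N_G(K)` of a vertex set `K`. -/
def nbhdSet (G : SimpleGraph V) (K : Set V) : Set V :=
  {v | v ∉ K ∧ ∃ u ∈ K, G.Adj u v}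

/-- `K` is (the vertex set of) a connected component of the subgraph of `G` induced on `S`. -/
def IsCompOf (G : SimpleGraph V) (K S : Set V) : Prop :=
  K.Nonempty ∧ K ⊆ S ∧ (G.induce K).Connected ∧ ∀ a ∈ K, ∀ b ∈ S, G.Adj a b → b ∈ K

/-- `K` is a component of `G − X` that is tight at `X`, i.e. `N_G(K) = X`. -/
def TightCompAt (G : SimpleGraph V) (K X : Set V) : Prop :=
  IsCompOf G K Xᶜ ∧ nbhdSet G K = X

/-- A separation `{A,B}` is tight if `G − (A ∩ B)` has tight components
contained in `A` and in `B`, respectively. -/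
def TightSep (G : SimpleGraph V) (A B : Set V) : Prop :=
  (∃ K, TightCompAt G K (A ∩ B) ∧ K ⊆ A) ∧ ∃ K, TightCompAt G K (A ∩ B) ∧ K ⊆ B

/-- `X` is a tight separator: `G − X` has at least two components tight at `X`. -/
def TightSeparator (G : SimpleGraph V) (X : Set V) : Prop :=
  ∃ K₁ K₂, K₁ ≠ K₂ ∧ TightCompAt G K₁ X ∧ TightCompAt G K₂ X

/-- The set `E_G(S,T)` of edges of `G` with one end in `S` and the other in `T`. -/
def edgesBetween (G : SimpleGraph V) (S T : Set V) : Set (Sym2 V) :=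
  {e | ∃ u v, G.Adj u v ∧ e = s(u, v) ∧ u ∈ S ∧ v ∈ T}

/-- `∂X`: the set of edges of `G` with exactly one end in `X`. -/
def edgeBdry (G : SimpleGraph V) (X : Set V) : Set (Sym2 V) :=
  {e | ∃ u v, G.Adj u v ∧ e = s(u, v) ∧ u ∈ X ∧ v ∉ X}

/-- The separator of an oriented separation. -/
def tsSep (s : Set V × Set V) : Set V := s.1 ∩ s.2

/-- `p` lists the three distinct oriented separations of a ⊤-star. -/
def IsTStar (G : SimpleGraph V) (p : Fin 3 → Set V × Set V) : Prop :=
  Function.Injective p ∧ (∀ i, IsSep G (p i).1 (p i).2) ∧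
  (∀ i j, i ≠ j → Disjoint ((p i).1 \ (p i).2) ((p j).1 \ (p j).2)) ∧
  (⋃ i, ((p i).1 \ (p i).2)) = (⋃ i, tsSep (p i))ᶜ ∧
  ∀ i, ∀ v ∈ tsSep (p i), ∃ j, j ≠ i ∧ v ∈ tsSep (p j)

/-- The centre `Z` of a ⊤-star. -/
def tsCentre (p : Fin 3 → Set V × Set V) : Set V := ⋂ i, tsSep (p i)

/-- The `ij`-link `X_{ij}` of a ⊤-star. -/
def tsLink (p : Fin 3 → Set V × Set V) (i j : Fin 3) : Set V :=
  (tsSep (p i) ∩ tsSep (p j)) \ tsCentre p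

/-- The ⊤-star `p` is relevant with base `p 0`. -/
def RelevantTStar (G : SimpleGraph V) (p : Fin 3 → Set V × Set V) : Prop :=
  IsTStar G p ∧ TightSep G (p 0).1 (p 0).2 ∧
  ∀ x ∈ tsLink p 1 2, ∀ i : Fin 3, i ≠ 0 →
    (∃ y ∈ tsLink p 0 i, G.Adj x y) ∨
    ∃ y ∈ tsLink p 0 i ∪ tsCentre p, ∃ K, IsCompOf G K ((p i).1 \ (p i).2) ∧
      x ∈ nbhdSet G K ∧ y ∈ nbhdSet G K

/-- A bottleneck of order `k` in `G`, encoded as a set of oriented separations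
closed under reversal (representing a set of unoriented separations). -/
def IsBottleneck (G : SimpleGraph V) (k : ℕ) (β : Set (Set V × Set V)) : Prop :=
  β.Nonempty ∧ (∀ s ∈ β, (s.2, s.1) ∈ β) ∧
  (∀ s ∈ β, IsSep G s.1 s.2 ∧ TightSep G s.1 s.2 ∧ (s.1 ∩ s.2).encard = k) ∧
  ∀ p : Fin 3 → Set V × Set V, RelevantTStar G p →
    (∀ i, (tsSep (p i)).encard ≤ (k : ℕ∞)) → p 0 ∈ β → p 1 ∈ β ∨ p 2 ∈ β

/-! ### Tangles -/

/-- A tangle of order `ℓ` in `G`. -/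
def IsTangle (G : SimpleGraph V) (ℓ : ℕ) (τ : Set (Set V × Set V)) : Prop :=
  (∀ s ∈ τ, IsSep G s.1 s.2 ∧ (s.1 ∩ s.2).encard < (ℓ : ℕ∞)) ∧
  (∀ A B : Set V, IsSep G A B → (A ∩ B).encard < (ℓ : ℕ∞) → ((A, B) ∈ τ ∨ (B, A) ∈ τ)) ∧
  (∀ A B : Set V, (A, B) ∈ τ → (B, A) ∈ τ → A = B) ∧
  ∀ s₁ ∈ τ, ∀ s₂ ∈ τ, ∀ s₃ ∈ τ,
    ¬(s₁.1 ∪ s₂.1 ∪ s₃.1 = Set.univ ∧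
      ∀ u v : V, G.Adj u v →
        (u ∈ s₁.1 ∧ v ∈ s₁.1) ∨ (u ∈ s₂.1 ∧ v ∈ s₂.1) ∨ (u ∈ s₃.1 ∧ v ∈ s₃.1))

/-- The separation `{A,B}` distinguishes the tangles `τ` and `τ'`. -/
def DistinguishesT (τ τ' : Set (Set V × Set V)) (A B : Set V) : Prop :=
  ((A, B) ∈ τ ∧ (B, A) ∈ τ') ∨ ((B, A) ∈ τ ∧ (A, B) ∈ τ')

/-- The separation `{A,B}` distinguishes the vertex sets `Y` and `Z`. -/
def DistSets (Y Z A B : Set V) : Prop :=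
  (Y ⊆ A ∧ (Y ∩ (A \ B)).Nonempty ∧ Z ⊆ B ∧ (Z ∩ (B \ A)).Nonempty) ∨
  (Y ⊆ B ∧ (Y ∩ (B \ A)).Nonempty ∧ Z ⊆ A ∧ (Z ∩ (A \ B)).Nonempty)

/-! ### The construction of the nested sets `N^k(G)` -/

/-- `X^k`: the union of all `k`-bottlenecks in `G`. -/
def Xk (G : SimpleGraph V) (k : ℕ) : Set (Set V × Set V) :=
  {s | ∃ β, IsBottleneck G k β ∧ s ∈ β}

/-- `x^k(s)`: the number of separations in `X^k` that `s` crosses. -/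
noncomputable def xk (G : SimpleGraph V) (k : ℕ) (s : Set V × Set V) : ℕ :=
  {t ∈ Xk G k | Crosses s t}.ncard

/-- `N^k(G,β)` relative to a previously constructed set `M` of separations:
the elements of `β` nested with `M` that minimise `x^k` among those. -/
def NkOfBeta (G : SimpleGraph V) (M : Set (Set V × Set V)) (k : ℕ)
    (β : Set (Set V × Set V)) : Set (Set V × Set V) :=
  {s ∈ β | (∀ t ∈ M, Nested s t) ∧
    ∀ s' ∈ β, (∀ t ∈ M, Nested s' t) → xk G k s ≤ xk G k s'}

/-- `N^k(G)` relative to a previously constructed set `M`. -/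
def NkStep (G : SimpleGraph V) (M : Set (Set V × Set V)) (k : ℕ) :
    Set (Set V × Set V) :=
  {s | ∃ β, IsBottleneck G k β ∧ s ∈ NkOfBeta G M k β}

/-- `N^{<k}(G) = ⋃_{j<k} N^j(G)`. -/
noncomputable def Nlt (G : SimpleGraph V) : ℕ → Set (Set V × Set V)
  | 0 => ∅
  | k + 1 => Nlt G k ∪ NkStep G (Nlt G k) k

/-- `N^k(G)`. -/
noncomputable def Nk (G : SimpleGraph V) (k : ℕ) : Set (Set V × Set V) :=
  NkStep G (Nlt G k) k

/-- `N(G) = ⋃_k N^k(G)`. -/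
noncomputable def NSet (G : SimpleGraph V) : Set (Set V × Set V) :=
  ⋃ k, Nk G k

/-! ### Walks, local components and local separations -/

/-- An `X`-walk: a walk having precisely its first and last vertex in `X`. -/
def IsXWalk (G : SimpleGraph V) (X : Set V) {u v : V} (W : G.Walk u v) : Prop :=
  u ∈ X ∧ v ∈ X ∧ ∀ w ∈ W.support, w ∈ X → w = u ∨ w = v

/-- An `r`-local `X`-walk: an `X`-walk contained in a cycle of length `≤ r`,
or an `X`-walk consisting of a single `X`-edge. -/
def IsLocalXWalk (G : SimpleGraph V) (r : ℕ) (X : Set V) {u v : V} (W : G.Walk u v) :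
    Prop :=
  IsXWalk G X W ∧
  ((∃ (a : V) (C : G.Walk a a), C.IsCycle ∧ C.length ≤ r ∧ ∀ e ∈ W.edges, e ∈ C.edges) ∨
    W.length = 1)

/-- An `r`-local `X`-path. -/
def IsLocalXPath (G : SimpleGraph V) (r : ℕ) (X : Set V) {u v : V} (W : G.Walk u v) :
    Prop :=
  IsLocalXWalk G r X W ∧ W.IsPath

/-- Walks that are concatenations of `r`-local `X`-paths. -/
inductive ConcatLocalPaths (G : SimpleGraph V) (r : ℕ) (X : Set V) :
    ∀ {u v : V}, G.Walk u v → Prop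
  | single {u v : V} (W : G.Walk u v) (h : IsLocalXPath G r X W) :
      ConcatLocalPaths G r X W
  | comp {u v w : V} (W₁ : G.Walk u v) (W₂ : G.Walk v w)
      (h₁ : IsLocalXPath G r X W₁) (h₂ : ConcatLocalPaths G r X W₂) :
      ConcatLocalPaths G r X (W₁.append W₂)

/-- `W ∈ W_r(X)`: `W` is a concatenation of `r`-local `X`-paths repeating no vertex of `X`. -/
def MemWr (G : SimpleGraph V) (r : ℕ) (X : Set V) {u v : V} (W : G.Walk u v) : Prop :=
  ConcatLocalPaths G r X W ∧ ∀ x ∈ X, ¬W.support.Duplicate x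

/-- `X` is `r`-tomic: any two of its vertices are joined by a walk in `W_r(X)`. -/
def Rtomic (G : SimpleGraph V) (r : ℕ) (X : Set V) : Prop :=
  ∀ x ∈ X, ∀ y ∈ X, x ≠ y → ∃ W : G.Walk x y, MemWr G r X W

/-- One step of the relation generating the `r`-local components at `X`:
`e = f`, or `e` and `f` are the first and last edges of an `r`-local `X`-walk
(both required to lie in `∂X`). -/
def LocalEdgeStep (G : SimpleGraph V) (r : ℕ) (X : Set V) (e f : Sym2 V) : Prop :=
  e ∈ edgeBdry G X ∧ f ∈ edgeBdry G X ∧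
  (e = f ∨ ∃ (u v : V) (W : G.Walk u v), IsLocalXWalk G r X W ∧
      W.edges.head? = some e ∧ W.edges.getLast? = some f)

/-- `F` is an `r`-local component at `X`: an equivalence class of the transitive
closure of `LocalEdgeStep` on `∂X`. -/
def LocalCompAt (G : SimpleGraph V) (r : ℕ) (X : Set V) (F : Set (Sym2 V)) : Prop :=
  ∃ e ∈ edgeBdry G X, F = {f | Relation.ReflTransGen (LocalEdgeStep G r X) e f}

/-- An edge set `F` is tight with respect to `X` if every vertex of `X`
is incident with an edge of `F`. -/
def TightLocalComp (X : Set V) (F : Set (Sym2 V)) : Prop :=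
  ∀ x ∈ X, ∃ e ∈ F, x ∈ e

/-- `X` is a tight `r`-local separator: at least two tight `r`-local components at `X`. -/
def TightLocalSeparator (G : SimpleGraph V) (r : ℕ) (X : Set V) : Prop :=
  ∃ F₁ F₂, F₁ ≠ F₂ ∧ LocalCompAt G r X F₁ ∧ LocalCompAt G r X F₂ ∧
    TightLocalComp X F₁ ∧ TightLocalComp X F₂

/-- `(E₁, X, E₂)` is an (oriented) `r`-local separation of `G`. -/
def IsLocalSep (G : SimpleGraph V) (r : ℕ) (E₁ : Set (Sym2 V)) (X : Set V)
    (E₂ : Set (Sym2 V)) : Prop :=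
  Disjoint E₁ E₂ ∧ E₁ ∪ E₂ = edgeBdry G X ∧
    ∀ F, LocalCompAt G r X F → F ⊆ E₁ ∨ F ⊆ E₂

/-- A tight `r`-local separation: each side includes a tight `r`-local component at `X`. -/
def TightLocalSep (G : SimpleGraph V) (r : ℕ) (E₁ : Set (Sym2 V)) (X : Set V)
    (E₂ : Set (Sym2 V)) : Prop :=
  IsLocalSep G r E₁ X E₂ ∧
  (∃ F, LocalCompAt G r X F ∧ TightLocalComp X F ∧ F ⊆ E₁) ∧
  ∃ F, LocalCompAt G r X F ∧ TightLocalComp X F ∧ F ⊆ E₂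

/-- The oriented `r`-local separation `s_r` induced by the oriented separation
`s = (A₁, A₂)`: its separator is `X = A₁ ∩ A₂`, and its sides are
`E_i = E_G(A_i ∖ X, X)`. -/
def inducedLocal (G : SimpleGraph V) (s : Set V × Set V) :
    Set (Sym2 V) × Set V × Set (Sym2 V) :=
  (edgesBetween G (s.1 \ (s.1 ∩ s.2)) (s.1 ∩ s.2), s.1 ∩ s.2,
    edgesBetween G (s.2 \ (s.1 ∩ s.2)) (s.1 ∩ s.2))

/-- Some cycle of `G` of length `≤ r` alternates between the disjoint sets `X` and `Y`:
it visits four distinct vertices `x, y, x', y'` in this cyclic order with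
`x, x' ∈ X` and `y, y' ∈ Y`. -/
def Alternates (G : SimpleGraph V) (r : ℕ) (X Y : Set V) : Prop :=
  ∃ (a : V) (C : G.Walk a a), C.IsCycle ∧ C.length ≤ r ∧
    ∃ (x y x' y' : V) (l₁ l₂ l₃ l₄ l₅ : List V),
      x ∈ X ∧ x' ∈ X ∧ y ∈ Y ∧ y' ∈ Y ∧ x ≠ x' ∧ y ≠ y' ∧
      C.support = l₁ ++ x :: l₂ ++ y :: l₃ ++ x' :: l₄ ++ y' :: l₅

/-- `X` and `Y` are `r`-coupled. -/
def RCoupled (G : SimpleGraph V) (r : ℕ) (X Y : Set V) : Prop :=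
  (X ∩ Y).Nonempty ∨ (Disjoint X Y ∧ Alternates G r X Y)

/-- The `X`-link for the side `Fi` of an `r`-local separation with separator `Y`:
vertices `x ∈ X ∖ Y` from which some walk in `W_r(X)` visits `Y` with its first
edge in `∂Y` lying in `Fi`. -/
def LocalLink (G : SimpleGraph V) (r : ℕ) (X Y : Set V) (Fi : Set (Sym2 V)) : Set V :=
  {x | x ∈ X \ Y ∧ ∃ (z : V) (W : G.Walk x z), MemWr G r X W ∧
      (∃ y ∈ Y, y ∈ W.support) ∧
      ∃ (e : Sym2 V) (l₁ l₂ : List (Sym2 V)), W.edges = l₁ ++ e :: l₂ ∧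
        e ∈ edgeBdry G Y ∧ e ∈ Fi ∧ ∀ e' ∈ l₁, e' ∉ edgeBdry G Y}

/-- The `r`-local separations `{E₁,X,E₂}` and `{F₁,Y,F₂}` cross. -/
def LocalCrosses (G : SimpleGraph V) (r : ℕ) (E₁ : Set (Sym2 V)) (X : Set V)
    (E₂ : Set (Sym2 V)) (F₁ : Set (Sym2 V)) (Y : Set V) (F₂ : Set (Sym2 V)) : Prop :=
  RCoupled G r X Y ∧ ∀ i j : Bool,
    (LocalLink G r X Y (cond j F₁ F₂)).Nonempty ∨
    (LocalLink G r Y X (cond i E₁ E₂)).Nonempty ∨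
    ((cond i E₁ E₂) ∩ (cond j F₁ F₂) ∩ edgeBdry G (X ∩ Y)).Nonempty

/-- The edge set of a walk, as a set. -/
def walkEdgeSet {G : SimpleGraph V} {a b : V} (W : G.Walk a b) : Set (Sym2 V) :=
  {e | e ∈ W.edges}

/-- The binary cycle space of `G` is generated by the cycles of length `≤ r`:
the edge set of every cycle is a symmetric difference of edge sets of cycles
of length `≤ r`. -/
def CycleSpaceGenShort (G : SimpleGraph V) (r : ℕ) : Prop :=
  ∀ ⦃a : V⦄ (C : G.Walk a a), C.IsCycle →
    ∃ L : List ((b : V) × G.Walk b b),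
      (∀ p ∈ L, p.2.IsCycle ∧ p.2.length ≤ r) ∧
      walkEdgeSet C = L.foldr (fun p E => symmDiff (walkEdgeSet p.2) E) ∅

/-! ### Local ⊤-stars and local bottlenecks -/

/-- `q` lists the three oriented `r`-local separations of an `r`-local ⊤-star. -/
def IsLocalTStar (G : SimpleGraph V) (r : ℕ)
    (q : Fin 3 → Set (Sym2 V) × Set V × Set (Sym2 V)) : Prop :=
  Function.Injective q ∧
  (∀ i, IsLocalSep G r (q i).1 (q i).2.1 (q i).2.2) ∧
  (∀ i j, i ≠ j → Disjoint (q i).1 (q j).1) ∧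
  (⋃ i, (q i).1) = edgeBdry G (⋃ i, (q i).2.1) ∧
  (∀ i, ∀ v ∈ (q i).2.1, ∃ j, j ≠ i ∧ v ∈ (q j).2.1) ∧
  ∀ F, LocalCompAt G r (⋃ i, (q i).2.1) F → ∃ i, F ⊆ (q i).1

/-- The `r`-local ⊤-star `q` is relevant with base `q 0`. -/
def RelevantLocalTStar (G : SimpleGraph V) (r : ℕ)
    (q : Fin 3 → Set (Sym2 V) × Set V × Set (Sym2 V)) : Prop :=
  IsLocalTStar G r q ∧ TightLocalSep G r (q 0).1 (q 0).2.1 (q 0).2.2 ∧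
  ∀ x ∈ ((q 1).2.1 ∩ (q 2).2.1) \ ⋂ j, (q j).2.1, ∀ i : Fin 3, i ≠ 0 →
    (∃ y ∈ ((q 0).2.1 ∩ (q i).2.1) \ ⋂ j, (q j).2.1, G.Adj x y) ∨
    ∃ F, LocalCompAt G r (⋃ j, (q j).2.1) F ∧ F ⊆ (q i).1 ∧
      (∃ e ∈ F, x ∈ e) ∧ ∃ e ∈ F, ∃ y ∈ (q 0).2.1 ∩ (q i).2.1, y ∈ e

/-- An `r`-local bottleneck of order `k` in `G`, encoded as a set of oriented
`r`-local separations closed under reversal. -/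
def IsLocalBottleneck (G : SimpleGraph V) (r k : ℕ)
    (β : Set (Set (Sym2 V) × Set V × Set (Sym2 V))) : Prop :=
  β.Nonempty ∧ (∀ q ∈ β, (q.2.2, q.2.1, q.1) ∈ β) ∧
  (∀ q ∈ β, TightLocalSep G r q.1 q.2.1 q.2.2 ∧ q.2.1.encard = (k : ℕ∞)) ∧
  ∀ p : Fin 3 → Set (Sym2 V) × Set V × Set (Sym2 V), RelevantLocalTStar G r p →
    (∀ i, ((p i).2.1).encard ≤ (k : ℕ∞)) → p 0 ∈ β → p 1 ∈ β ∨ p 2 ∈ β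

section Aux

variable {G : SimpleGraph V}

lemma isSep_symm {A B : Set V} (h : IsSep G A B) : IsSep G B A :=
  ⟨by rw [Set.union_comm]; exact h.1, fun b hb a ha hadj => h.2 a ha b hb hadj.symm⟩

lemma dist_symm {τ τ' : Set (Set V × Set V)} {A B : Set V}
    (h : DistinguishesT τ τ' A B) : DistinguishesT τ τ' B A := h.symm

lemma dist_swap {τ τ' : Set (Set V × Set V)} {A B : Set V}
    (h : DistinguishesT τ τ' A B) : DistinguishesT τ' τ A B := by
  rcases h with ⟨h1, h2⟩ | ⟨h1, h2⟩
  · exact Or.inr ⟨h2, h1⟩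
  · exact Or.inl ⟨h2, h1⟩

lemma mem_union_nbhd {U : Set V} {u v : V} (hu : u ∈ U) (h : G.Adj u v) :
    v ∈ U ∪ nbhdSet G U := by
  by_cases hv : v ∈ U
  · exact Or.inl hv
  · exact Or.inr ⟨hv, u, hu, h⟩

lemma region_inter (G : SimpleGraph V) (U : Set V) :
    (U ∪ nbhdSet G U) ∩ Uᶜ = nbhdSet G U := by
  ext v
  constructor
  · rintro ⟨hv1 | hv1, hv2⟩
    · exact absurd hv1 hv2
    · exact hv1
  · intro hv
    exact ⟨Or.inr hv, hv.1⟩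

lemma isSep_region (G : SimpleGraph V) (U : Set V) : IsSep G (U ∪ nbhdSet G U) Uᶜ := by
  constructor
  · apply Set.eq_univ_of_forall
    intro v
    by_cases hv : v ∈ U
    · exact Or.inl (Or.inl hv)
    · exact Or.inr hv
  · intro a ha b hb hadj
    have haU : a ∈ U := by
      rcases ha.1 with h | h
      · exact h
      · exact absurd h.1 (not_not.mpr (by simpa using ha.2))
    exact hb.2 (mem_union_nbhd haU hadj)

lemma tangle_no_triple {m : ℕ} {τ : Set (Set V × Set V)} (hτ : IsTangle G m τ)
    {s₁ s₂ s₃ : Set V × Set V} (h₁ : s₁ ∈ τ) (h₂ : s₂ ∈ τ) (h₃ : s₃ ∈ τ)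
    (hcov : ∀ v : V, v ∈ s₁.1 ∨ v ∈ s₂.1 ∨ v ∈ s₃.1)
    (hedge : ∀ u v, G.Adj u v →
      (u ∈ s₁.1 ∧ v ∈ s₁.1) ∨ (u ∈ s₂.1 ∧ v ∈ s₂.1) ∨ (u ∈ s₃.1 ∧ v ∈ s₃.1)) :
    False := by
  refine hτ.2.2.2 s₁ h₁ s₂ h₂ s₃ h₃ ⟨Set.eq_univ_of_forall fun v => ?_, hedge⟩
  rcases hcov v with h | h | h
  · exact Or.inl (Or.inl h)
  · exact Or.inl (Or.inr h)
  · exact Or.inr h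

lemma reachable_of_mem_support {α : Type*} {G' : SimpleGraph α} {x y z : α}
    (p : G'.Walk x y) (hz : z ∈ p.support) : G'.Reachable x z := by
  induction p with
  | nil =>
    rw [SimpleGraph.Walk.support_nil, List.mem_singleton] at hz
    subst hz
    exact SimpleGraph.Reachable.refl _
  | cons h q ih =>
    rw [SimpleGraph.Walk.support_cons, List.mem_cons] at hz
    rcases hz with rfl | hz
    · exact SimpleGraph.Reachable.refl _
    · exact (h.reachable).trans (ih hz)

lemma walk_transfer {W K : Set V} {x y : ↥W} (p : (G.induce W).Walk x y)
    (hK : ∀ z ∈ p.support, (z : V) ∈ K) :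
    ∀ (hx : (x : V) ∈ K) (hy : (y : V) ∈ K),
      (G.induce K).Reachable ⟨x, hx⟩ ⟨y, hy⟩ := by
  induction p with
  | nil => intro hx hy; exact SimpleGraph.Reachable.refl _
  | @cons a b c h q ih =>
    intro hx hy
    have hb : (b : V) ∈ K := hK b (by simp)
    have hadj : (G.induce K).Adj ⟨a, hx⟩ ⟨b, hb⟩ := h
    exact hadj.reachable.trans (ih (fun z hz => hK z (by simp [hz])) hb hy)

lemma step_side {A B : Set V} (hsep : IsSep G A B) {u v : V} (hu : u ∈ A \ B)
    (hv : v ∉ A ∩ B) (hadj : G.Adj u v) : v ∈ A \ B := by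
  have hvAB : v ∈ A ∪ B := hsep.1 ▸ Set.mem_univ v
  by_cases hvA : v ∈ A
  · exact ⟨hvA, fun hvB => hv ⟨hvA, hvB⟩⟩
  · exact absurd hadj (hsep.2 u hu v ⟨hvAB.resolve_left hvA, hvA⟩)

lemma walk_side {A B : Set V} (hsep : IsSep G A B) {x y : ↥(A ∩ B)ᶜ}
    (p : (G.induce (A ∩ B)ᶜ).Walk x y) (hx : (x : V) ∈ A \ B) : (y : V) ∈ A \ B := by
  induction p with
  | nil => exact hx
  | @cons a b c h q ih =>
    have hadj : G.Adj (a : V) (b : V) := h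
    exact ih (step_side hsep hx b.2 hadj)

lemma comp_in_side {A B : Set V} (hsep : IsSep G A B) {v : V} (hv : v ∈ A \ B) :
    ∃ K, IsCompOf G K (A ∩ B)ᶜ ∧ v ∈ K ∧ K ⊆ A \ B := by
  set X := A ∩ B with hX
  have hvX : v ∈ Xᶜ := fun h => hv.2 h.2
  refine ⟨{u | ∃ hu : u ∈ Xᶜ, (G.induce Xᶜ).Reachable ⟨u, hu⟩ ⟨v, hvX⟩}, ?_, ?_, ?_⟩
  · refine ⟨⟨v, hvX, SimpleGraph.Reachable.refl _⟩, fun u hu => hu.choose, ?_, ?_⟩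
    · rw [SimpleGraph.connected_iff]
      constructor
      · intro a b
        obtain ⟨ha, ra⟩ := a.2
        obtain ⟨hb, rb⟩ := b.2
        obtain ⟨p⟩ := ra.trans rb.symm
        have hsupp : ∀ z ∈ p.support, (z : V) ∈
            {u | ∃ hu : u ∈ Xᶜ, (G.induce Xᶜ).Reachable ⟨u, hu⟩ ⟨v, hvX⟩} := by
          intro z hz
          exact ⟨z.2, ((reachable_of_mem_support p hz).symm.trans ra : _)⟩
        have := walk_transfer p hsupp a.2 b.2
        convert this
      · exact ⟨⟨v, hvX, SimpleGraph.Reachable.refl _⟩⟩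
    · rintro a ⟨ha, ra⟩ b hb hadj
      have hadj' : (G.induce Xᶜ).Adj ⟨b, hb⟩ ⟨a, ha⟩ := hadj.symm
      exact ⟨hb, hadj'.reachable.trans ra⟩
  · exact ⟨hvX, SimpleGraph.Reachable.refl _⟩
  · rintro u ⟨hu, ru⟩
    obtain ⟨p⟩ := ru.symm
    exact walk_side hsep p hv

end Aux

section Main

variable {G : SimpleGraph V}

lemma exists_tight {ℓ ℓ' k : ℕ} {τ τ' : Set (Set V × Set V)} {A B : Set V}
    (hτ : IsTangle G ℓ τ) (hτ' : IsTangle G ℓ' τ')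
    (hAB : (A, B) ∈ τ) (hBA : (B, A) ∈ τ')
    (hcard : (A ∩ B).encard = (k : ℕ∞))
    (hmin : ∀ C D : Set V, DistinguishesT τ τ' C D → (k : ℕ∞) ≤ (C ∩ D).encard) :
    ∃ K, TightCompAt G K (A ∩ B) ∧ K ⊆ A := by
  set X := A ∩ B with hX
  have hsep : IsSep G A B := (hτ.1 _ hAB).1
  have hkl : (k : ℕ∞) < ℓ := hcard ▸ (hτ.1 _ hAB).2
  have hkl' : (k : ℕ∞) < ℓ' := by
    have h := (hτ'.1 _ hBA).2
    simpa only [Set.inter_comm B A, ← hX, hcard] using h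
  have hXfin : X.Finite := Set.finite_of_encard_eq_coe hcard
  set 𝒦 : Set (Set V) := {K | IsCompOf G K Xᶜ ∧ K ⊆ A \ B} with h𝒦
  -- neighbourhoods of unions of components lie in X
  have hNsub : ∀ S ⊆ 𝒦, nbhdSet G (⋃₀ S) ⊆ X := by
    rintro S hS v ⟨hvU, u, hu, hadj⟩
    obtain ⟨K, hK, huK⟩ := hu
    by_contra hvX
    exact hvU ⟨K, hK, (hS hK).1.2.2.2 u huK v hvX hadj⟩
  have hUsub : ∀ S ⊆ 𝒦, ⋃₀ S ⊆ A \ B := by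
    rintro S hS v ⟨K, hK, hvK⟩
    exact (hS hK).2 hvK
  -- tangles orient the region separations
  have hordS : ∀ S ⊆ 𝒦,
      ((⋃₀ S ∪ nbhdSet G (⋃₀ S)) ∩ (⋃₀ S)ᶜ).encard ≤ (k : ℕ∞) := by
    intro S hS
    rw [region_inter]
    exact hcard ▸ Set.encard_mono (hNsub S hS)
  have horient : ∀ {m : ℕ} {σ : Set (Set V × Set V)}, IsTangle G m σ → (k : ℕ∞) < m →
      ∀ S ⊆ 𝒦, (⋃₀ S ∪ nbhdSet G (⋃₀ S), (⋃₀ S)ᶜ) ∈ σ ∨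
        ((⋃₀ S)ᶜ, ⋃₀ S ∪ nbhdSet G (⋃₀ S)) ∈ σ := by
    intro m σ hσ hkm S hS
    exact hσ.2.1 _ _ (isSep_region G _) (lt_of_le_of_lt (hordS S hS) hkm)
  -- τ never points into such a region
  have hτaway : ∀ S ⊆ 𝒦, (⋃₀ S ∪ nbhdSet G (⋃₀ S), (⋃₀ S)ᶜ) ∈ τ := by
    intro S hS
    rcases horient hτ hkl S hS with h | h
    · exact h
    exfalso
    refine tangle_no_triple hτ hAB h h (fun v => ?_) (fun u v hadj => ?_)
    · by_cases hv : v ∈ ⋃₀ S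
      · exact Or.inl ((hUsub S hS hv).1)
      · exact Or.inr (Or.inl hv)
    · by_cases huv : u ∈ ⋃₀ S ∨ v ∈ ⋃₀ S
      · left
        have key : ∀ w, w ∈ ⋃₀ S ∪ nbhdSet G (⋃₀ S) → w ∈ A := by
          rintro w (hw | hw)
          · exact (hUsub S hS hw).1
          · exact (hNsub S hS hw).1
        rcases huv with hu | hv
        · exact ⟨key u (Or.inl hu), key v (mem_union_nbhd hu hadj)⟩
        · exact ⟨key u (mem_union_nbhd hv hadj.symm), key v (Or.inl hv)⟩
      · push_neg at huv
        exact Or.inr (Or.inl ⟨huv.1, huv.2⟩)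
  -- if τ' points into a region, its neighbourhood is all of X
  have hfull : ∀ S ⊆ 𝒦, ((⋃₀ S)ᶜ, ⋃₀ S ∪ nbhdSet G (⋃₀ S)) ∈ τ' →
      nbhdSet G (⋃₀ S) = X := by
    intro S hS hInto
    have hdist : DistinguishesT τ τ'
        (⋃₀ S ∪ nbhdSet G (⋃₀ S)) (⋃₀ S)ᶜ := Or.inl ⟨hτaway S hS, hInto⟩
    have hge : (k : ℕ∞) ≤ (nbhdSet G (⋃₀ S)).encard := by
      have := hmin _ _ hdist
      rwa [region_inter] at this
    exact Set.Finite.eq_of_subset_of_encard_le' hXfin (hNsub S hS) (hcard ▸ hge)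
  -- a region pointed into is non-empty
  have hnonemp : ∀ S : Set (Set V),
      ((⋃₀ S)ᶜ, ⋃₀ S ∪ nbhdSet G (⋃₀ S)) ∈ τ' → (⋃₀ S).Nonempty := by
    intro S hInto
    rw [Set.nonempty_iff_ne_empty]
    intro hUe
    refine tangle_no_triple hτ' hInto hInto hInto (fun v => ?_) (fun u v _ => ?_)
    · exact Or.inl (by simp [hUe])
    · exact Or.inl ⟨by simp [hUe], by simp [hUe]⟩
  -- splitting
  have hsplit : ∀ S₁ S₂, S₁ ⊆ 𝒦 → S₂ ⊆ 𝒦 →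
      ((⋃₀ (S₁ ∪ S₂))ᶜ, ⋃₀ (S₁ ∪ S₂) ∪ nbhdSet G (⋃₀ (S₁ ∪ S₂))) ∈ τ' →
      ((⋃₀ S₁)ᶜ, ⋃₀ S₁ ∪ nbhdSet G (⋃₀ S₁)) ∈ τ' ∨
      ((⋃₀ S₂)ᶜ, ⋃₀ S₂ ∪ nbhdSet G (⋃₀ S₂)) ∈ τ' := by
    intro S₁ S₂ hS₁ hS₂ hInto
    by_contra hcon
    push_neg at hcon
    have h₁ : (⋃₀ S₁ ∪ nbhdSet G (⋃₀ S₁), (⋃₀ S₁)ᶜ) ∈ τ' :=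
      (horient hτ' hkl' S₁ hS₁).resolve_right hcon.1
    have h₂ : (⋃₀ S₂ ∪ nbhdSet G (⋃₀ S₂), (⋃₀ S₂)ᶜ) ∈ τ' :=
      (horient hτ' hkl' S₂ hS₂).resolve_right hcon.2
    refine tangle_no_triple hτ' h₁ h₂ hInto (fun v => ?_) (fun u v hadj => ?_)
    · by_cases hv1 : v ∈ ⋃₀ S₁
      · exact Or.inl (Or.inl hv1)
      by_cases hv2 : v ∈ ⋃₀ S₂
      · exact Or.inr (Or.inl (Or.inl hv2))
      · refine Or.inr (Or.inr ?_)
        rw [Set.sUnion_union]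
        rintro (h | h) <;> [exact hv1 h; exact hv2 h]
    · by_cases hu1 : u ∈ ⋃₀ S₁ ∨ v ∈ ⋃₀ S₁
      · rcases hu1 with h | h
        · exact Or.inl ⟨Or.inl h, mem_union_nbhd h hadj⟩
        · exact Or.inl ⟨mem_union_nbhd h hadj.symm, Or.inl h⟩
      by_cases hu2 : u ∈ ⋃₀ S₂ ∨ v ∈ ⋃₀ S₂
      · rcases hu2 with h | h
        · exact Or.inr (Or.inl ⟨Or.inl h, mem_union_nbhd h hadj⟩)
        · exact Or.inr (Or.inl ⟨mem_union_nbhd h hadj.symm, Or.inl h⟩)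
      · push_neg at hu1 hu2
        refine Or.inr (Or.inr ⟨?_, ?_⟩) <;> (rw [Set.sUnion_union]; rintro (h | h))
        · exact hu1.1 h
        · exact hu2.1 h
        · exact hu1.2 h
        · exact hu2.2 h
  -- filtering by a vertex of X
  have hfilter : ∀ S ⊆ 𝒦, ∀ x ∈ X,
      ((⋃₀ S)ᶜ, ⋃₀ S ∪ nbhdSet G (⋃₀ S)) ∈ τ' →
      ((⋃₀ {K ∈ S | x ∈ nbhdSet G K})ᶜ,
        ⋃₀ {K ∈ S | x ∈ nbhdSet G K} ∪ nbhdSet G (⋃₀ {K ∈ S | x ∈ nbhdSet G K})) ∈ τ' := by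
    intro S hS x hx hInto
    set S₁ := {K ∈ S | x ∈ nbhdSet G K} with hS₁def
    set S₂ := {K ∈ S | x ∉ nbhdSet G K} with hS₂def
    have hunion : S₁ ∪ S₂ = S := by
      ext K
      constructor
      · rintro (h | h) <;> exact h.1
      · intro h
        by_cases hxK : x ∈ nbhdSet G K
        · exact Or.inl ⟨h, hxK⟩
        · exact Or.inr ⟨h, hxK⟩
    have hS₁sub : S₁ ⊆ 𝒦 := fun K hK => hS hK.1
    have hS₂sub : S₂ ⊆ 𝒦 := fun K hK => hS hK.1
    rcases hsplit S₁ S₂ hS₁sub hS₂sub (by rw [hunion]; exact hInto) with h | h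
    · exact h
    exfalso
    have hfullS₂ := hfull S₂ hS₂sub h
    have hxN : x ∈ nbhdSet G (⋃₀ S₂) := hfullS₂ ▸ hx
    obtain ⟨hxU, u, hu, hadj⟩ := hxN
    obtain ⟨K, hK, huK⟩ := hu
    exact hK.2 ⟨fun hxK => hxU ⟨K, hK, hxK⟩, u, huK, hadj⟩
  -- τ' points into the whole of A \ B
  have hUall : ⋃₀ 𝒦 = A \ B := by
    apply Set.Subset.antisymm (hUsub 𝒦 le_rfl)
    intro v hv
    obtain ⟨K, hK1, hK2, hK3⟩ := comp_in_side hsep hv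
    exact ⟨K, ⟨hK1, hK3⟩, hK2⟩
  have hInto𝒦 : ((⋃₀ 𝒦)ᶜ, ⋃₀ 𝒦 ∪ nbhdSet G (⋃₀ 𝒦)) ∈ τ' := by
    rcases horient hτ' hkl' 𝒦 le_rfl with h | h
    swap
    · exact h
    exfalso
    refine tangle_no_triple hτ' h hBA hBA (fun v => ?_) (fun u v hadj => ?_)
    · by_cases hv : v ∈ ⋃₀ 𝒦
      · exact Or.inl (Or.inl hv)
      · right; left
        have hvAB : v ∈ A ∪ B := hsep.1 ▸ Set.mem_univ v
        rcases hvAB with h' | h'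
        · by_cases hvB : v ∈ B
          · exact hvB
          · exact absurd (hUall ▸ Set.mem_diff_of_mem h' hvB) hv
        · exact h'
    · by_cases huv : u ∈ ⋃₀ 𝒦 ∨ v ∈ ⋃₀ 𝒦
      · rcases huv with h' | h'
        · exact Or.inl ⟨Or.inl h', mem_union_nbhd h' hadj⟩
        · exact Or.inl ⟨mem_union_nbhd h' hadj.symm, Or.inl h'⟩
      · push_neg at huv
        right; left
        rw [hUall] at huv
        constructor
        · have : u ∈ A ∪ B := hsep.1 ▸ Set.mem_univ u
          rcases this with h' | h'
          · by_contra hB; exact huv.1 ⟨h', hB⟩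
          · exact h'
        · have : v ∈ A ∪ B := hsep.1 ▸ Set.mem_univ v
          rcases this with h' | h'
          · by_contra hB; exact huv.2 ⟨h', hB⟩
          · exact h'
  -- induction over the vertices of X
  have hind : ∃ S ⊆ 𝒦, ((⋃₀ S)ᶜ, ⋃₀ S ∪ nbhdSet G (⋃₀ S)) ∈ τ' ∧
      ∀ x ∈ X, ∀ K ∈ S, x ∈ nbhdSet G K := by
    have := Set.Finite.induction_on_subset
      (motive := fun Y _ => ∃ S ⊆ 𝒦, ((⋃₀ S)ᶜ, ⋃₀ S ∪ nbhdSet G (⋃₀ S)) ∈ τ' ∧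
        ∀ x ∈ Y, ∀ K ∈ S, x ∈ nbhdSet G K) X hXfin
      ⟨𝒦, le_rfl, hInto𝒦, by simp⟩
      (fun {a s} ha _ _ ih => by
        obtain ⟨S, hS, hInto, hall⟩ := ih
        refine ⟨{K ∈ S | a ∈ nbhdSet G K}, fun K hK => hS hK.1,
          hfilter S hS a ha hInto, ?_⟩
        rintro x (rfl | hx) K hK
        · exact hK.2
        · exact hall x hx K hK.1)
    exact this
  obtain ⟨S, hS, hInto, hall⟩ := hind
  obtain ⟨u, K, hK, huK⟩ := hnonemp S hInto
  refine ⟨K, ⟨(hS hK).1, ?_⟩, (hS hK).2.trans Set.diff_subset⟩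
  apply Set.Subset.antisymm
  · have := hNsub {K} (by simpa using hS hK)
    rwa [Set.sUnion_singleton] at this
  · intro x hx
    exact hall x hx K hK

end Main

section TStar

variable {G : SimpleGraph V}

lemma fin3_common : ∀ i j i' j' : Fin 3, i ≠ j → i' ≠ j' →
    i = i' ∨ i = j' ∨ j = i' ∨ j = j' := by decide

lemma tstar_core {ℓ ℓ' k : ℕ} {τ τ' : Set (Set V × Set V)}
    (hτ : IsTangle G ℓ τ) (hτ' : IsTangle G ℓ' τ')
    {p : Fin 3 → Set V × Set V} (hts : IsTStar G p)
    (hord : ∀ i, (tsSep (p i)).encard ≤ (k : ℕ∞))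
    (hkl : (k : ℕ∞) < ℓ) (hkl' : (k : ℕ∞) < ℓ')
    (h0τ : ((p 0).1, (p 0).2) ∈ τ) (h0τ' : ((p 0).2, (p 0).1) ∈ τ')
    (h1 : ¬DistinguishesT τ τ' (p 1).1 (p 1).2)
    (h2 : ¬DistinguishesT τ τ' (p 2).1 (p 2).2) : False := by
  obtain ⟨hinj, hsep, hdisj, hcov, hsep2⟩ := hts
  have huniv : ∀ i : Fin 3, ∀ v : V, v ∈ (p i).1 ∪ (p i).2 :=
    fun i v => (hsep i).1 ▸ Set.mem_univ v
  -- anything not in A_j \ B_j is in B_j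
  have hBmem : ∀ (j : Fin 3) (v : V), v ∉ (p j).1 \ (p j).2 → v ∈ (p j).2 := by
    intro j v hv
    rcases huniv j v with h | h
    · by_contra hB
      exact hv ⟨h, hB⟩
    · exact h
  -- anything in a separator is in no A_j \ B_j
  have hsepdiff : ∀ (i j : Fin 3) (v : V), v ∈ tsSep (p i) → v ∉ (p j).1 \ (p j).2 := by
    intro i j v hv hv'
    have : v ∈ ⋃ m, ((p m).1 \ (p m).2) := Set.mem_iUnion.mpr ⟨j, hv'⟩
    rw [hcov] at this
    exact this (Set.mem_iUnion.mpr ⟨i, hv⟩)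
  -- covering by the A_i
  have hcovA : ∀ v : V, v ∈ (p 0).1 ∨ v ∈ (p 1).1 ∨ v ∈ (p 2).1 := by
    intro v
    by_cases hv : v ∈ ⋃ i, tsSep (p i)
    · obtain ⟨i, hi⟩ := Set.mem_iUnion.mp hv
      fin_cases i
      · exact Or.inl hi.1
      · exact Or.inr (Or.inl hi.1)
      · exact Or.inr (Or.inr hi.1)
    · have : v ∈ ⋃ i, ((p i).1 \ (p i).2) := by rw [hcov]; exact hv
      obtain ⟨i, hi⟩ := Set.mem_iUnion.mp this
      fin_cases i
      · exact Or.inl hi.1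
      · exact Or.inr (Or.inl hi.1)
      · exact Or.inr (Or.inr hi.1)
  -- every edge lives in some A_i
  have hedgeA : ∀ u v, G.Adj u v → ∃ i : Fin 3, u ∈ (p i).1 ∧ v ∈ (p i).1 := by
    intro u v hadj
    by_cases hu : u ∈ ⋃ i, ((p i).1 \ (p i).2)
    · obtain ⟨i, hi⟩ := Set.mem_iUnion.mp hu
      refine ⟨i, hi.1, ?_⟩
      rcases huniv i v with h | h
      · exact h
      · by_contra hvA
        exact (hsep i).2 u hi v ⟨h, hvA⟩ hadj
    by_cases hv : v ∈ ⋃ i, ((p i).1 \ (p i).2)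
    · obtain ⟨i, hi⟩ := Set.mem_iUnion.mp hv
      refine ⟨i, ?_, hi.1⟩
      rcases huniv i u with h | h
      · exact h
      · by_contra huA
        exact (hsep i).2 v hi u ⟨h, huA⟩ hadj.symm
    · have hu' : u ∈ ⋃ i, tsSep (p i) := by
        by_contra h; exact hu (by rw [hcov]; exact h)
      have hv' : v ∈ ⋃ i, tsSep (p i) := by
        by_contra h; exact hv (by rw [hcov]; exact h)
      obtain ⟨i, hiu⟩ := Set.mem_iUnion.mp hu'
      obtain ⟨j, hju, hj⟩ := hsep2 i u hiu
      obtain ⟨i', hiv⟩ := Set.mem_iUnion.mp hv'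
      obtain ⟨j', hjv, hj'⟩ := hsep2 i' v hiv
      rcases fin3_common j i j' i' hju hjv with rfl | rfl | rfl | rfl
      · exact ⟨j, hj.1, hj'.1⟩
      · exact ⟨j, hj.1, hiv.1⟩
      · exact ⟨i, hiu.1, hj'.1⟩
      · exact ⟨i, hiu.1, hiv.1⟩
  -- τ does not contain both (p 1) and (p 2) positively
  have hnotboth : ¬(((p 1).1, (p 1).2) ∈ τ ∧ ((p 2).1, (p 2).2) ∈ τ) := by
    rintro ⟨ha, hb⟩
    refine tangle_no_triple hτ h0τ ha hb hcovA (fun u v hadj => ?_)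
    obtain ⟨i, hi⟩ := hedgeA u v hadj
    fin_cases i
    · exact Or.inl hi
    · exact Or.inr (Or.inl hi)
    · exact Or.inr (Or.inr hi)
  -- so some j ∈ {1,2} is oriented negatively by τ, hence also by τ'
  have hkey : ∀ j : Fin 3, j ≠ 0 → ((p j).1, (p j).2) ∉ τ →
      ¬DistinguishesT τ τ' (p j).1 (p j).2 → False := by
    intro j hj0 hjτ hjdist
    have horj : ((p j).2, (p j).1) ∈ τ :=
      (hτ.2.1 _ _ (hsep j) (lt_of_le_of_lt (hord j) hkl)).resolve_left hjτ
    have hjτ' : ((p j).1, (p j).2) ∉ τ' := fun h =>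
      hjdist (Or.inr ⟨horj, h⟩)
    have horj' : ((p j).2, (p j).1) ∈ τ' :=
      (hτ'.2.1 _ _ (hsep j) (lt_of_le_of_lt (hord j) hkl')).resolve_left hjτ'
    -- now τ' contains (B₀,A₀) and (B_j,A_j) : contradiction
    -- key: any vertex not in B₀ is in A₀ \ B₀, hence (disjointness) in B_j
    have hj0' : (0 : Fin 3) ≠ j := fun h => hj0 h.symm
    have hdisj0j := hdisj 0 j hj0'
    have hin0j : ∀ w : V, w ∈ (p 0).1 → w ∈ (p j).2 := by
      intro w hw
      apply hBmem
      by_cases hwB : w ∈ (p 0).2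
      · exact hsepdiff 0 j w ⟨hw, hwB⟩
      · exact fun hwj => (Set.disjoint_left.mp hdisj0j ⟨hw, hwB⟩) hwj
    refine tangle_no_triple hτ' h0τ' horj' horj' (fun v => ?_) (fun u v hadj => ?_)
    · by_cases hv : v ∈ (p 0).2
      · exact Or.inl hv
      · exact Or.inr (Or.inl (hin0j v ((huniv 0 v).resolve_right hv)))
    · by_cases hb : u ∈ (p 0).2 ∧ v ∈ (p 0).2
      · exact Or.inl hb
      · right; left
        -- some end avoids B₀, so it is in A₀ \ B₀; then both ends are in A₀
        have hends : u ∈ (p 0).1 ∧ v ∈ (p 0).1 := by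
          rcases not_and_or.mp hb with hu | hv
          · have huA : u ∈ (p 0).1 \ (p 0).2 := ⟨(huniv 0 u).resolve_right hu, hu⟩
            refine ⟨huA.1, ?_⟩
            rcases huniv 0 v with h | h
            · exact h
            · by_contra hvA
              exact (hsep 0).2 u huA v ⟨h, hvA⟩ hadj
          · have hvA : v ∈ (p 0).1 \ (p 0).2 := ⟨(huniv 0 v).resolve_right hv, hv⟩
            refine ⟨?_, hvA.1⟩
            rcases huniv 0 u with h | h
            · exact h
            · by_contra huA
              exact (hsep 0).2 v hvA u ⟨h, huA⟩ hadj.symm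
        exact ⟨hin0j u hends.1, hin0j v hends.2⟩
  -- finish: τ orients p 1 or p 2 negatively
  by_cases h1τ : ((p 1).1, (p 1).2) ∈ τ
  · by_cases h2τ : ((p 2).1, (p 2).2) ∈ τ
    · exact hnotboth ⟨h1τ, h2τ⟩
    · exact hkey 2 (by decide) h2τ h2
  · exact hkey 1 (by decide) h1τ h1

lemma tstar_closure {ℓ ℓ' k : ℕ} {τ τ' : Set (Set V × Set V)}
    (hτ : IsTangle G ℓ τ) (hτ' : IsTangle G ℓ' τ')
    {p : Fin 3 → Set V × Set V} (hts : IsTStar G p)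
    (hord : ∀ i, (tsSep (p i)).encard ≤ (k : ℕ∞))
    (hkl : (k : ℕ∞) < ℓ) (hkl' : (k : ℕ∞) < ℓ')
    (h0 : DistinguishesT τ τ' (p 0).1 (p 0).2) :
    DistinguishesT τ τ' (p 1).1 (p 1).2 ∨ DistinguishesT τ τ' (p 2).1 (p 2).2 := by
  by_contra hcon
  push_neg at hcon
  rcases h0 with ⟨h0τ, h0τ'⟩ | ⟨h0τ, h0τ'⟩
  · exact tstar_core hτ hτ' hts hord hkl hkl' h0τ h0τ' hcon.1 hcon.2
  · exact tstar_core hτ' hτ hts hord hkl' hkl h0τ' h0τ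
      (fun h => hcon.1 (dist_swap h)) (fun h => hcon.2 (dist_swap h))

end TStar

/-- The set of separations efficiently distinguishing two
distinguishable tangles `τ, τ'` is a bottleneck of order `k`, where `k` is the
minimum order of a separation distinguishing `τ` and `τ'`. -/
theorem statement3 {V : Type*} (G : SimpleGraph V) (ℓ ℓ' : ℕ)
    (τ τ' : Set (Set V × Set V))
    (hτ : IsTangle G ℓ τ) (hτ' : IsTangle G ℓ' τ') (k : ℕ)
    (hex : ∃ A B : Set V, DistinguishesT τ τ' A B ∧ (A ∩ B).encard = (k : ℕ∞))
    (hmin : ∀ A B : Set V, DistinguishesT τ τ' A B → (k : ℕ∞) ≤ (A ∩ B).encard) :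
    IsBottleneck G k
      {s : Set V × Set V | IsSep G s.1 s.2 ∧ DistinguishesT τ τ' s.1 s.2 ∧
        ∀ C D : Set V, DistinguishesT τ τ' C D →
          (s.1 ∩ s.2).encard ≤ (C ∩ D).encard} := by
  obtain ⟨A₀, B₀, hd₀, hc₀⟩ := hex
  set β : Set (Set V × Set V) :=
    {s : Set V × Set V | IsSep G s.1 s.2 ∧ DistinguishesT τ τ' s.1 s.2 ∧
        ∀ C D : Set V, DistinguishesT τ τ' C D →
          (s.1 ∩ s.2).encard ≤ (C ∩ D).encard} with hβ
  have hmemsep : ∀ {A B : Set V}, DistinguishesT τ τ' A B → IsSep G A B := by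
    rintro A B (⟨h, _⟩ | ⟨h, _⟩)
    · exact (hτ.1 _ h).1
    · exact isSep_symm (hτ.1 _ h).1
  have horder : ∀ s ∈ β, (s.1 ∩ s.2).encard = (k : ℕ∞) := fun s hs =>
    le_antisymm (hc₀ ▸ hs.2.2 A₀ B₀ hd₀) (hmin _ _ hs.2.1)
  have hminswap : ∀ C D : Set V, DistinguishesT τ' τ C D → (k : ℕ∞) ≤ (C ∩ D).encard :=
    fun C D h => hmin C D (dist_swap h)
  refine ⟨⟨(A₀, B₀), hmemsep hd₀, hd₀, fun C D h => hc₀ ▸ hmin C D h⟩, ?_, ?_, ?_⟩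
  · rintro ⟨s₁, s₂⟩ hs
    exact ⟨isSep_symm hs.1, dist_symm hs.2.1,
      fun C D h => by rw [Set.inter_comm]; exact hs.2.2 C D h⟩
  · rintro ⟨s₁, s₂⟩ hs
    refine ⟨hs.1, ?_, horder _ hs⟩
    have hcard : (s₁ ∩ s₂).encard = (k : ℕ∞) := horder _ hs
    have hcard' : (s₂ ∩ s₁).encard = (k : ℕ∞) := by rw [Set.inter_comm]; exact hcard
    rcases hs.2.1 with ⟨h₁, h₂⟩ | ⟨h₁, h₂⟩
    · refine ⟨exists_tight hτ hτ' h₁ h₂ hcard hmin, ?_⟩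
      obtain ⟨K, hK1, hK2⟩ := exists_tight hτ' hτ h₂ h₁ hcard' hminswap
      rw [Set.inter_comm] at hK1
      exact ⟨K, hK1, hK2⟩
    · refine ⟨exists_tight hτ' hτ h₂ h₁ hcard hminswap, ?_⟩
      obtain ⟨K, hK1, hK2⟩ := exists_tight hτ hτ' h₁ h₂ hcard' hmin
      rw [Set.inter_comm] at hK1
      exact ⟨K, hK1, hK2⟩
  · intro p hrel hord h0
    have hd0 : DistinguishesT τ τ' (p 0).1 (p 0).2 := h0.2.1
    have h0card : ((p 0).1 ∩ (p 0).2).encard = (k : ℕ∞) := horder _ h0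
    have hkl : (k : ℕ∞) < ℓ := by
      rcases hd0 with ⟨h, _⟩ | ⟨h, _⟩
      · exact h0card ▸ (hτ.1 _ h).2
      · have := (hτ.1 _ h).2
        rwa [Set.inter_comm, h0card] at this
    have hkl' : (k : ℕ∞) < ℓ' := by
      rcases hd0 with ⟨_, h⟩ | ⟨_, h⟩
      · have := (hτ'.1 _ h).2
        rwa [Set.inter_comm, h0card] at this
      · exact h0card ▸ (hτ'.1 _ h).2
    have hts := hrel.1
    rcases tstar_closure hτ hτ' hts hord hkl hkl' hd0 with h | h
    · left
      exact ⟨(hts.2.1 1), h, fun C D hCD => le_trans (hord 1) (hmin C D hCD)⟩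
    · right
      exact ⟨(hts.2.1 2), h, fun C D hCD => le_trans (hord 2) (hmin C D hCD)⟩

end LS
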